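/- Let x be an edge of a finite connected Brauer graph G such that x does not lie on a cycle, and neither endpoint condition of Lemma (non-exceptionality) holds: at least one endpoint u of x is such that every path from the other endpoint v avoiding x reaches no vertex on a cycle and no vertex of multiplicity >1. Then the subgraph generated by all such paths from v, together with x and u, is an exceptional subtree of G with connecting vertex u; in particular x is exceptional. -/

import Mathlib

/-!
A Brauer graph is encoded (forgetting the cyclic orderings, which play no role in
these statements) as a finite connected multigraph: a vertex type `V`, an edge type
`E`, an endpoint map `ends : E → Sym2 V`, together with a multiplicity `mult : V → ℕ`.
-/

structure Multigraph (V E : Type) where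
  ends : E → Sym2 V

namespace Multigraph

variable {V E : Type}

/-- A walk of length `n` in a multigraph: vertices `vs 0, …, vs n` and edges
`es 0, …, es (n-1)` with `es i` joining `vs i` and `vs (i+1)`. -/
structure Walk (G : Multigraph V E) (n : ℕ) where
  vs : Fin (n + 1) → V
  es : Fin n → E
  ok : ∀ i : Fin n, G.ends (es i) = s(vs i.castSucc, vs i.succ)

/-- The walk stays inside the subgraph with vertex set `VS` and edge set `ES`. -/
def Walk.inSub {G : Multigraph V E} {n : ℕ} (w : G.Walk n) (VS : Set V) (ES : Set E) :
    Prop :=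
  (∀ i, w.vs i ∈ VS) ∧ ∀ i, w.es i ∈ ES

/-- A cycle: a closed walk of positive length with pairwise distinct edges and
pairwise distinct vertices (other than the repeated endpoint). -/
def IsCycleWalk (G : Multigraph V E) {n : ℕ} (w : G.Walk n) : Prop :=
  0 < n ∧ Function.Injective w.es ∧ w.vs (Fin.last n) = w.vs 0 ∧
    ∀ i j : Fin n, w.vs i.castSucc = w.vs j.castSucc → i = j

def VertexOnCycle (G : Multigraph V E) (v : V) : Prop :=
  ∃ n, ∃ w : G.Walk n, G.IsCycleWalk w ∧ ∃ i, w.vs i = v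

def EdgeOnCycle (G : Multigraph V E) (e : E) : Prop :=
  ∃ n, ∃ w : G.Walk n, G.IsCycleWalk w ∧ ∃ i, w.es i = e

/-- The subgraph on `(VS, ES)` is closed (edges of `ES` have endpoints in `VS`)
and any two of its vertices are joined by a walk inside it. -/
def SubConnected (G : Multigraph V E) (VS : Set V) (ES : Set E) : Prop :=
  (∀ e ∈ ES, ∀ v ∈ G.ends e, v ∈ VS) ∧
    ∀ u ∈ VS, ∀ v ∈ VS, ∃ n, ∃ w : G.Walk n,
      w.inSub VS ES ∧ w.vs 0 = u ∧ w.vs (Fin.last n) = v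

def Connected (G : Multigraph V E) : Prop := G.SubConnected Set.univ Set.univ

/-- The subgraph on `(VS, ES)` is a tree: connected and containing no cycle. -/
def IsTreeSub (G : Multigraph V E) (VS : Set V) (ES : Set E) : Prop :=
  G.SubConnected VS ES ∧
    ¬ ∃ n, ∃ w : G.Walk n, G.IsCycleWalk w ∧ w.inSub VS ES

/-- `G` with multiplicities `mult` is a Brauer tree: a tree with at most one vertex
of multiplicity greater than one. -/
def IsBrauerTree (G : Multigraph V E) (mult : V → ℕ) : Prop :=
  G.IsTreeSub Set.univ Set.univ ∧ {v : V | 1 < mult v}.Subsingleton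

/-- An exceptional subtree of a Brauer graph `(G, mult)`: a tree subgraph `(VS, ES)`
with a unique connecting vertex `v` such that the complement `(G \ T) ∪ {v}` is
connected, `T` meets cycles of `G` only possibly at `v`, and every vertex of `T`
other than possibly `v` has multiplicity `1`. -/
structure ExcSubtree (G : Multigraph V E) (mult : V → ℕ) where
  VS : Set V
  ES : Set E
  v : V
  v_mem : v ∈ VS
  tree : G.IsTreeSub VS ES
  compl_conn : G.SubConnected (VSᶜ ∪ {v}) ESᶜ
  v_unique : ∀ u ∈ VS, G.SubConnected (VSᶜ ∪ {u}) ESᶜ → u = v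
  cycles : ∀ u ∈ VS, G.VertexOnCycle u → u = v
  mult_one : ∀ u ∈ VS, u ≠ v → mult u = 1

/-- An edge is exceptional if it belongs to some exceptional subtree. -/
def ExceptionalEdge (G : Multigraph V E) (mult : V → ℕ) (e : E) : Prop :=
  ∃ T : G.ExcSubtree mult, e ∈ T.ES

/-- ℕ-indexed chains: a walk of length `n` from `a` to `b` staying in `(S, T)`. -/
def Chain (G : Multigraph V E) (S : Set V) (T : Set E) (a b : V) : Prop :=
  ∃ (n : ℕ) (f : ℕ → V) (g : ℕ → E), f 0 = a ∧ f n = b ∧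
    (∀ i < n, G.ends (g i) = s(f i, f (i + 1))) ∧
    (∀ i ≤ n, f i ∈ S) ∧ (∀ i < n, g i ∈ T)

variable {G : Multigraph V E} {S : Set V} {T : Set E} {a b c : V}

lemma chain_refl (e0 : E) (ha : a ∈ S) : G.Chain S T a a :=
  ⟨0, fun _ => a, fun _ => e0, rfl, rfl, fun i hi => absurd hi (by omega),
    fun _ _ => ha, fun i hi => absurd hi (by omega)⟩

lemma chain_single {e : E} (he : G.ends e = s(a, b)) (heT : e ∈ T) (ha : a ∈ S)
    (hb : b ∈ S) : G.Chain S T a b := by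
  refine ⟨1, fun i => if i = 0 then a else b, fun _ => e, by simp, by simp, ?_, ?_, fun _ _ => heT⟩
  · intro i hi
    interval_cases i
    simpa using he
  · intro i hi
    interval_cases i <;> simp [ha, hb]

lemma chain_symm (h : G.Chain S T a b) : G.Chain S T b a := by
  obtain ⟨n, f, g, hf0, hfn, hok, hfS, hgT⟩ := h
  refine ⟨n, fun i => f (n - i), fun i => g (n - 1 - i), by simp [hfn], by simp [hf0],
    ?_, fun i _ => hfS _ (by omega), fun i hi => hgT _ (by omega)⟩
  intro i hi
  have h1 : n - 1 - i < n := by omega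
  have h2 : n - 1 - i + 1 = n - i := by omega
  have h3 : n - 1 - i = n - (i + 1) := by omega
  rw [hok _ h1, h2, h3, Sym2.eq_swap]

lemma chain_trans (h1 : G.Chain S T a b) (h2 : G.Chain S T b c) : G.Chain S T a c := by
  obtain ⟨n, f, g, hf0, hfn, hok, hfS, hgT⟩ := h1
  obtain ⟨m, f', g', hf0', hfm', hok', hfS', hgT'⟩ := h2
  refine ⟨n + m, fun i => if i ≤ n then f i else f' (i - n),
    fun i => if i < n then g i else g' (i - n), by simp [hf0], ?_, ?_, ?_, ?_⟩
  · rcases Nat.eq_zero_or_pos m with rfl | hm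
    · simpa using hfn.trans (hf0'.symm.trans hfm')
    · have hnm : ¬ n + m ≤ n := by omega
      simp only [hnm, if_false, Nat.add_sub_cancel_left, hfm']
  · intro i hi
    rcases Nat.lt_or_ge i n with h | h
    · have e1 : i ≤ n := by omega
      have e2 : i + 1 ≤ n := by omega
      simp only [h, if_true, e1, e2]
      exact hok i h
    · have e1 : ¬ i < n := by omega
      have e2 : ¬ i + 1 ≤ n := by omega
      have hlt : i - n < m := by omega
      have e3 : i + 1 - n = i - n + 1 := by omega
      simp only [e1, if_false, e2, e3]
      by_cases e4 : i ≤ n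
      · have hin : i = n := le_antisymm e4 h
        subst hin
        simp only [le_rfl, if_true, Nat.sub_self, hfn, ← hf0']
        simpa using hok' 0 (by omega)
      · simp only [e4, if_false]
        exact hok' _ hlt
  · intro i hi
    rcases le_or_gt i n with h | h
    · simp only [h, if_true]; exact hfS i h
    · have e1 : ¬ i ≤ n := by omega
      simp only [e1, if_false]
      exact hfS' _ (by omega)
  · intro i hi
    rcases Nat.lt_or_ge i n with h | h
    · simp only [h, if_true]; exact hgT i h
    · have e1 : ¬ i < n := by omega
      simp only [e1, if_false]
      exact hgT' _ (by omega)

lemma chain_toWalk (h : G.Chain S T a b) :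
    ∃ n, ∃ w : G.Walk n, w.inSub S T ∧ w.vs 0 = a ∧ w.vs (Fin.last n) = b := by
  obtain ⟨n, f, g, hf0, hfn, hok, hfS, hgT⟩ := h
  refine ⟨n, ⟨fun i => f i, fun i => g i, fun i => by simpa using hok i i.isLt⟩,
    ⟨fun i => hfS i (by omega), fun i => hgT i i.isLt⟩, by simpa using hf0, by simpa using hfn⟩

lemma walk_chain (e0 : E) {n : ℕ} (w : G.Walk n) (hS : ∀ i, w.vs i ∈ S)
    (hT : ∀ i, w.es i ∈ T) (j : Fin (n + 1)) :
    G.Chain S T (w.vs 0) (w.vs j) := by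
  have hm : (j : ℕ) ≤ n := by omega
  set m : ℕ := (j : ℕ) with hmdef
  refine ⟨m, fun i => w.vs ⟨min i n, by omega⟩,
    fun i => if h : i < n then w.es ⟨i, h⟩ else e0, ?_, ?_, ?_, fun i _ => hS _, ?_⟩
  · show w.vs ⟨min 0 n, by omega⟩ = w.vs 0
    congr 1
  · show w.vs ⟨min m n, by omega⟩ = w.vs j
    congr 1
    exact Fin.ext (by simp [Nat.min_eq_left hm, hmdef, j.is_le])
  · intro i hi
    have hin : i < n := lt_of_lt_of_le hi hm
    show G.ends (if h : i < n then w.es ⟨i, h⟩ else e0) =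
      s(w.vs ⟨min i n, by omega⟩, w.vs ⟨min (i + 1) n, by omega⟩)
    have e1 : (⟨min i n, by omega⟩ : Fin (n + 1)) = (⟨i, hin⟩ : Fin n).castSucc :=
      Fin.ext (by simp [Nat.min_eq_left hin.le])
    have e2 : (⟨min (i + 1) n, by omega⟩ : Fin (n + 1)) = (⟨i, hin⟩ : Fin n).succ :=
      Fin.ext (by simp [Nat.min_eq_left (Nat.succ_le_of_lt hin)])
    rw [dif_pos hin, e1, e2]
    exact w.ok _
  · intro i hi
    have hin : i < n := lt_of_lt_of_le hi hm
    show (if h : i < n then w.es ⟨i, h⟩ else e0) ∈ T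
    rw [dif_pos hin]
    exact hT _


/-- Vertices reachable from `v` by walks avoiding `x`. -/
abbrev genVerts (G : Multigraph V E) (x : E) (v : V) : Set V :=
  {z : V | ∃ n, ∃ w : G.Walk n, w.vs 0 = v ∧ (∀ i, w.es i ≠ x) ∧ ∃ i, w.vs i = z}

/-- Edges used by walks from `v` avoiding `x`. -/
abbrev genEdges (G : Multigraph V E) (x : E) (v : V) : Set E :=
  {e : E | ∃ n, ∃ w : G.Walk n, w.vs 0 = v ∧ (∀ i, w.es i ≠ x) ∧ ∃ i, w.es i = e}

/-- `z` is chain-reachable from `v` avoiding `x`. -/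
abbrev ZCr (G : Multigraph V E) (x : E) (v z : V) : Prop :=
  G.Chain Set.univ {e : E | e ≠ x} v z

end Multigraph

open Multigraph

theorem exceptional_subtree_generated_by_paths
    (V E : Type) [Fintype V] [Fintype E] (G : Multigraph V E) (mult : V → ℕ)
    (hmult : ∀ v, 1 ≤ mult v) (hconn : G.Connected)
    (hnt : ¬ G.IsBrauerTree mult)
    (x : E) (u v : V) (hends : G.ends x = s(u, v))
    (hnc : ¬ G.EdgeOnCycle x)
    (havoid : ∀ n, ∀ w : G.Walk n, w.vs 0 = v → (∀ i, w.es i ≠ x) →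
      ∀ i, ¬ G.VertexOnCycle (w.vs i) ∧ mult (w.vs i) = 1) :
    (∃ T : G.ExcSubtree mult,
      T.v = u ∧
      T.VS = {u} ∪ {z : V | ∃ n, ∃ w : G.Walk n, w.vs 0 = v ∧
        (∀ i, w.es i ≠ x) ∧ ∃ i, w.vs i = z} ∧
      T.ES = {x} ∪ {e : E | ∃ n, ∃ w : G.Walk n, w.vs 0 = v ∧
        (∀ i, w.es i ≠ x) ∧ ∃ i, w.es i = e}) ∧
    G.ExceptionalEdge mult x := by
  classical
  have hZCv : G.ZCr x v v := chain_refl x (Set.mem_univ v)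
  have hvx : v ∈ G.ends x := by rw [hends]; exact Sym2.mem_mk_right u v
  -- reachable vertices are exactly chain-reachable ones
  have hZiff : ∀ z, z ∈ G.genVerts x v ↔ G.ZCr x v z := by
    intro z
    constructor
    · rintro ⟨n, w, h0, hx', i, rfl⟩
      have hc := walk_chain (G := G) x w (S := Set.univ) (T := {e : E | e ≠ x})
        (fun _ => Set.mem_univ _) (fun j => hx' j) i
      rwa [h0] at hc
    · intro hz
      obtain ⟨n, w, ⟨-, hesT⟩, h0, hlast⟩ := chain_toWalk hz
      exact ⟨n, w, h0, fun i => hesT i, Fin.last n, hlast⟩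
  -- extending a chain by one edge
  have hextend : ∀ (e : E) (p q : V), e ≠ x → G.ends e = s(p, q) → G.ZCr x v p →
      e ∈ G.genEdges x v ∧ G.ZCr x v q := by
    intro e p q hex hpq hp
    have hq : G.ZCr x v q :=
      chain_trans hp (chain_single hpq hex (Set.mem_univ p) (Set.mem_univ q))
    refine ⟨?_, hq⟩
    obtain ⟨n, f, g, hf0, hfn, hok, -, hgT⟩ := hp
    refine ⟨n + 1, ⟨fun i => if (i : ℕ) ≤ n then f i else q,
      fun i => if (i : ℕ) < n then g i else e, ?_⟩, ?_, ?_, ⟨n, by omega⟩, ?_⟩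
    · intro i
      simp only [Fin.coe_castSucc, Fin.val_succ]
      rcases lt_or_ge (i : ℕ) n with h | h
      · have e1 : (i : ℕ) ≤ n := by omega
        have e2 : (i : ℕ) + 1 ≤ n := by omega
        rw [if_pos h, if_pos e1, if_pos e2]
        exact hok i h
      · have hn : (i : ℕ) = n := by omega
        have e1 : ¬ (i : ℕ) < n := by omega
        have e2 : (i : ℕ) ≤ n := by omega
        have e3 : ¬ (i : ℕ) + 1 ≤ n := by omega
        rw [if_neg e1, if_pos e2, if_neg e3, hn, hfn, hpq]
    · show (if ((0 : Fin (n + 2)) : ℕ) ≤ n then f ((0 : Fin (n + 2)) : ℕ) else q) = v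
      simp [hf0]
    · intro i
      show (if (i : ℕ) < n then g (i : ℕ) else e) ≠ x
      rcases lt_or_ge (i : ℕ) n with h | h
      · rw [if_pos h]; exact hgT _ h
      · rw [if_neg (by omega)]; exact hex
    · show (if ((⟨n, by omega⟩ : Fin (n + 1)) : ℕ) < n then g _ else e) = e
      rw [if_neg (by simp)]
  -- endpoints of generated edges are chain-reachable
  have hF_ends : ∀ e ∈ G.genEdges x v, ∀ p ∈ G.ends e, G.ZCr x v p := by
    rintro e ⟨n, w, h0, hx', i, rfl⟩ p hp
    rw [w.ok i] at hp
    rcases Sym2.mem_iff.mp hp with h | h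
    · subst h; exact (hZiff _).mp ⟨n, w, h0, hx', i.castSucc, rfl⟩
    · subst h; exact (hZiff _).mp ⟨n, w, h0, hx', i.succ, rfl⟩
  -- edges of the subtree have a chain-reachable endpoint
  have hES_mem : ∀ e ∈ ({x} ∪ G.genEdges x v : Set E), ∃ p ∈ G.ends e, G.ZCr x v p := by
    rintro e (rfl | he)
    · exact ⟨v, hvx, hZCv⟩
    · obtain ⟨n, w, h0, hx', i, rfl⟩ := he
      refine ⟨w.vs i.castSucc, ?_, (hZiff _).mp ⟨n, w, h0, hx', i.castSucc, rfl⟩⟩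
      rw [w.ok i]; exact Sym2.mem_mk_left _ _
  -- any edge incident to a chain-reachable vertex is in the subtree
  have hincident : ∀ (e : E) (p : V), p ∈ G.ends e → G.ZCr x v p →
      e ∈ ({x} ∪ G.genEdges x v : Set E) := by
    intro e p hp hz
    by_cases hex : e = x
    · exact Or.inl hex
    · obtain ⟨q, hq⟩ := Sym2.mem_iff_exists.mp hp
      exact Or.inr (hextend e p q hex hq hz).1
  -- chain-reachable vertices are not on cycles and have multiplicity one
  have hZprop : ∀ z, G.ZCr x v z → ¬ G.VertexOnCycle z ∧ mult z = 1 := by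
    intro z hz
    obtain ⟨n, w, h0, hx', i, rfl⟩ := (hZiff z).mpr hz
    exact havoid n w h0 hx' i
  -- u is not chain-reachable
  have hu : ¬ G.ZCr x v u := by
    intro hZu
    have hall : ∀ t : V, G.ZCr x v t := by
      intro t
      obtain ⟨n, w, -, h0, hlast⟩ := hconn.2 v (Set.mem_univ v) t (Set.mem_univ t)
      have hc := walk_chain (G := G) x w (S := Set.univ) (T := Set.univ)
        (fun _ => Set.mem_univ _) (fun _ => Set.mem_univ _) (Fin.last n)
      rw [h0, hlast] at hc
      obtain ⟨m, f, g, hf0, hfm, hok, -, -⟩ := hc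
      suffices h : ∀ k, k ≤ m → G.ZCr x v (f k) by rw [← hfm]; exact h m le_rfl
      intro k
      induction k with
      | zero => intro _; rw [hf0]; exact hZCv
      | succ k ih =>
        intro hk
        have hkZ := ih (by omega)
        have hok' := hok k (by omega)
        by_cases hex : g k = x
        · rw [hex, hends] at hok'
          rcases Sym2.eq_iff.mp hok' with ⟨h1, h2⟩ | ⟨h1, h2⟩
          · rw [← h2]; exact hZCv
          · rw [← h1]; exact hZu
        · exact (hextend (g k) (f k) (f (k + 1)) hex hok' hkZ).2
    apply hnt
    constructor
    · refine ⟨hconn, ?_⟩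
      rintro ⟨n, w, hcyc, -⟩
      exact (hZprop _ (hall (w.vs 0))).1 ⟨n, w, hcyc, 0, rfl⟩
    · intro p hp q hq
      exfalso
      have := (hZprop p (hall p)).2
      simp only [Set.mem_setOf_eq] at hp
      omega
  have hMemVS : ∀ z, G.ZCr x v z → z ∈ ({u} ∪ G.genVerts x v : Set V) :=
    fun z hz => Or.inr ((hZiff z).mpr hz)
  -- connectivity of the subtree: every vertex is joined to u inside it
  have hC : ∀ a ∈ ({u} ∪ G.genVerts x v : Set V),
      G.Chain ({u} ∪ G.genVerts x v) ({x} ∪ G.genEdges x v) u a := by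
    rintro a (rfl | ha)
    · exact chain_refl x (Or.inl rfl)
    · obtain ⟨n, f, g, hf0, hfn, hok, -, hgT⟩ := (hZiff a).mp ha
      have hfZ : ∀ i, i ≤ n → G.ZCr x v (f i) := by
        intro i hi
        exact ⟨i, f, g, hf0, rfl, fun j hj => hok j (by omega),
          fun j _ => Set.mem_univ _, fun j hj => hgT j (by omega)⟩
      have c2 : G.Chain ({u} ∪ G.genVerts x v) ({x} ∪ G.genEdges x v) v a := by
        refine ⟨n, f, g, hf0, hfn, hok, fun i hi => hMemVS _ (hfZ i hi), fun i hi => ?_⟩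
        refine hincident (g i) (f i) ?_ (hfZ i (le_of_lt hi))
        rw [hok i hi]; exact Sym2.mem_mk_left _ _
      exact chain_trans (chain_single hends (Or.inl rfl) (Or.inl rfl) (hMemVS v hZCv)) c2
  -- the subtree is a tree
  have htree : G.IsTreeSub ({u} ∪ G.genVerts x v) ({x} ∪ G.genEdges x v) := by
    refine ⟨⟨?_, ?_⟩, ?_⟩
    · rintro e (rfl | he) p hp
      · rw [hends] at hp
        rcases Sym2.mem_iff.mp hp with rfl | rfl
        · exact Or.inl rfl
        · exact hMemVS _ hZCv
      · exact hMemVS p (hF_ends e he p hp)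
    · intro a ha b hb
      exact chain_toWalk (chain_trans (chain_symm (hC a ha)) (hC b hb))
    · rintro ⟨n, w, hcyc, hsubV, hsubE⟩
      have h0n : 0 < n := hcyc.1
      rcases hsubE ⟨0, h0n⟩ with he | he
      · exact hnc ⟨n, w, hcyc, ⟨0, h0n⟩, he⟩
      · have hp : G.ZCr x v (w.vs (Fin.castSucc ⟨0, h0n⟩)) := by
          refine hF_ends _ he _ ?_
          rw [w.ok ⟨0, h0n⟩]; exact Sym2.mem_mk_left _ _
        exact (hZprop _ hp).1 ⟨n, w, hcyc, _, rfl⟩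
  -- the complement vertex set is exactly the non-chain-reachable vertices
  have hcompl_set : (({u} ∪ G.genVerts x v : Set V)ᶜ ∪ {u}) = {p : V | ¬ G.ZCr x v p} := by
    ext p
    constructor
    · rintro (h | h)
      · intro hz; exact h (hMemVS p hz)
      · have hpu : p = u := h
        intro hz; rw [hpu] at hz; exact hu hz
    · intro h
      by_cases hpu : p = u
      · exact Or.inr hpu
      · left
        rintro (h' | h')
        · exact hpu h'
        · exact h ((hZiff p).mp h')
  -- complement connectivity
  have hcompl : G.SubConnected ((({u} ∪ G.genVerts x v : Set V))ᶜ ∪ {u})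
      (({x} ∪ G.genEdges x v : Set E)ᶜ) := by
    rw [hcompl_set]
    constructor
    · intro e he p hp hz
      exact he (hincident e p hp hz)
    · intro a ha b hb
      have ha' : ¬ G.ZCr x v a := ha
      have hb' : ¬ G.ZCr x v b := hb
      obtain ⟨n, w, -, h0, hlast⟩ := hconn.2 a (Set.mem_univ a) b (Set.mem_univ b)
      have hc := walk_chain (G := G) x w (S := Set.univ) (T := Set.univ)
        (fun _ => Set.mem_univ _) (fun _ => Set.mem_univ _) (Fin.last n)
      rw [h0, hlast] at hc
      obtain ⟨m, f, g, hf0, hfm, hok, -, -⟩ := hc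
      have hnotES : ∀ j, j < m → ¬ G.ZCr x v (f j) → ¬ G.ZCr x v (f (j + 1)) →
          g j ∈ ({x} ∪ G.genEdges x v : Set E)ᶜ := by
        intro j hj h1 h2 hmem
        obtain ⟨p, hp, hzp⟩ := hES_mem _ hmem
        rw [hok j hj] at hp
        rcases Sym2.mem_iff.mp hp with h | h
        · rw [h] at hzp; exact h1 hzp
        · rw [h] at hzp; exact h2 hzp
      by_cases hZ : ∃ i, i ≤ m ∧ G.ZCr x v (f i)
      · obtain ⟨iw, hiwle, hiwZ⟩ := hZ
        have hZ' : ∃ i, G.ZCr x v (f i) := ⟨iw, hiwZ⟩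
        have hi0Z : G.ZCr x v (f (Nat.find hZ')) := Nat.find_spec hZ'
        set i0 := Nat.find hZ' with hi0def
        have hi0min : ∀ j, j < i0 → ¬ G.ZCr x v (f j) := fun j hj => Nat.find_min hZ' hj
        have hi0le : i0 ≤ m := (Nat.find_min' hZ' hiwZ).trans hiwle
        have hi0pos : 0 < i0 := by
          rcases Nat.eq_zero_or_pos i0 with h | h
          · exfalso; apply ha'; rw [← hf0]
            rw [h] at hi0Z; exact hi0Z
          · exact h
        have hi1Z : G.ZCr x v (f (Nat.findGreatest (fun i => G.ZCr x v (f i)) m)) :=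
          Nat.findGreatest_spec (P := fun i => G.ZCr x v (f i)) hiwle hiwZ
        set i1 := Nat.findGreatest (fun i => G.ZCr x v (f i)) m with hi1def
        have hi1le : i1 ≤ m := Nat.findGreatest_le m
        have hi1max : ∀ j, i1 < j → j ≤ m → ¬ G.ZCr x v (f j) := fun j h1 h2 =>
          Nat.findGreatest_is_greatest h1 h2
        have hi1lt : i1 < m := by
          rcases Nat.lt_or_ge i1 m with h | h
          · exact h
          · exfalso; apply hb'; rw [← hfm]
            have he : i1 = m := le_antisymm hi1le h
            rw [← he]; exact hi1Z
        have hbdry1 : f (i0 - 1) = u := by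
          have h1 : ¬ G.ZCr x v (f (i0 - 1)) := hi0min _ (by omega)
          have hok' := hok (i0 - 1) (by omega)
          have heq : i0 - 1 + 1 = i0 := by omega
          rw [heq] at hok'
          by_cases hex : g (i0 - 1) = x
          · rw [hex, hends] at hok'
            rcases Sym2.eq_iff.mp hok' with ⟨h2, h3⟩ | ⟨h2, h3⟩
            · exact h2.symm
            · exfalso; apply h1; rw [← h3]; exact hZCv
          · exfalso
            apply h1
            exact (hextend (g (i0 - 1)) (f i0) (f (i0 - 1)) hex
              (by rw [hok']; exact Sym2.eq_swap) hi0Z).2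
        have hbdry2 : f (i1 + 1) = u := by
          have h2 : ¬ G.ZCr x v (f (i1 + 1)) := hi1max _ (by omega) (by omega)
          have hok' := hok i1 (by omega)
          by_cases hex : g i1 = x
          · rw [hex, hends] at hok'
            rcases Sym2.eq_iff.mp hok' with ⟨h3, h4⟩ | ⟨h3, h4⟩
            · exfalso; apply h2; rw [← h4]; exact hZCv
            · exact h3.symm
          · exfalso
            apply h2
            exact (hextend (g i1) (f i1) (f (i1 + 1)) hex hok' hi1Z).2
        have c1 : G.Chain {p : V | ¬ G.ZCr x v p} (({x} ∪ G.genEdges x v : Set E)ᶜ) a u :=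
          ⟨i0 - 1, f, g, hf0, hbdry1, fun j hj => hok j (by omega),
            fun j hj => hi0min j (by omega), fun j hj => hnotES j (by omega)
              (hi0min j (by omega)) (hi0min (j + 1) (by omega))⟩
        have c2 : G.Chain {p : V | ¬ G.ZCr x v p} (({x} ∪ G.genEdges x v : Set E)ᶜ) u b := by
          refine ⟨m - (i1 + 1), fun j => f (i1 + 1 + j), fun j => g (i1 + 1 + j),
            by simpa using hbdry2, ?_, ?_, ?_, ?_⟩
          · show f (i1 + 1 + (m - (i1 + 1))) = b
            have he : i1 + 1 + (m - (i1 + 1)) = m := by omega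
            rw [he, hfm]
          · intro j hj
            show G.ends (g (i1 + 1 + j)) = s(f (i1 + 1 + j), f (i1 + 1 + (j + 1)))
            have he : i1 + 1 + (j + 1) = i1 + 1 + j + 1 := by omega
            rw [he]
            exact hok (i1 + 1 + j) (by omega)
          · intro j hj
            exact hi1max (i1 + 1 + j) (by omega) (by omega)
          · intro j hj
            exact hnotES (i1 + 1 + j) (by omega) (hi1max _ (by omega) (by omega))
              (hi1max (i1 + 1 + j + 1) (by omega) (by omega))
        exact chain_toWalk (chain_trans c1 c2)
      · push_neg at hZ
        exact chain_toWalk ⟨m, f, g, hf0, hfm, hok, fun i hi => hZ i hi,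
          fun i hi => hnotES i hi (hZ i (by omega)) (hZ (i + 1) (by omega))⟩
  -- uniqueness of the connecting vertex
  have huniq : ∀ u' ∈ ({u} ∪ G.genVerts x v : Set V),
      G.SubConnected ((({u} ∪ G.genVerts x v : Set V))ᶜ ∪ {u'})
        (({x} ∪ G.genEdges x v : Set E)ᶜ) → u' = u := by
    intro u' hu' hsub
    by_contra hne
    have hu'Z : G.ZCr x v u' := by
      rcases hu' with h | h
      · exact absurd h hne
      · exact (hZiff u').mp h
    by_cases hemp : ∀ p : V, p ∈ ({u} ∪ G.genVerts x v : Set V)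
    · apply hnt
      constructor
      · refine ⟨hconn, ?_⟩
        rintro ⟨n, w, hcyc, -⟩
        have hvert : ∀ i : Fin n, w.vs i.castSucc = u := by
          intro i
          rcases hemp (w.vs i.castSucc) with h | h
          · exact h
          · exact absurd ⟨n, w, hcyc, i.castSucc, rfl⟩ (hZprop _ ((hZiff _).mp h)).1
        have h0n : 0 < n := hcyc.1
        have hn1 : n = 1 := by
          by_contra hn
          have h2 : (⟨0, h0n⟩ : Fin n) = ⟨1, by omega⟩ :=
            hcyc.2.2.2 _ _ (by rw [hvert, hvert])
          have h3 := congrArg Fin.val h2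
          simp at h3
        subst hn1
        have hvs0 : w.vs 0 = u := by
          have h4 := hvert ⟨0, h0n⟩
          rwa [show Fin.castSucc ⟨0, h0n⟩ = (0 : Fin 2) from Fin.ext (by simp)] at h4
        have he := w.ok ⟨0, h0n⟩
        have hsucc : (⟨0, h0n⟩ : Fin 1).succ = Fin.last 1 := rfl
        rw [hsucc, hcyc.2.2.1, hvs0, hvert ⟨0, h0n⟩] at he
        by_cases hmem : w.es ⟨0, h0n⟩ ∈ ({x} ∪ G.genEdges x v : Set E)
        · obtain ⟨p, hp, hzp⟩ := hES_mem _ hmem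
          rw [he] at hp
          rcases Sym2.mem_iff.mp hp with h | h <;> rw [h] at hzp <;> exact hu hzp
        · have h5 := hsub.1 _ hmem u (by rw [he]; exact Sym2.mem_mk_left u u)
          rcases h5 with h | h
          · exact h (Or.inl rfl)
          · exact hne h.symm
      · intro p hp q hq
        have hpu : ∀ r, 1 < mult r → r = u := by
          intro r hr
          rcases hemp r with h | h
          · exact h
          · exact absurd (hZprop r ((hZiff r).mp h)).2 (by omega)
        simp only [Set.mem_setOf_eq] at hp hq
        rw [hpu p hp, hpu q hq]
    · push_neg at hemp
      obtain ⟨z0, hz0⟩ := hemp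
      obtain ⟨n, w, ⟨-, hes⟩, h0, hlast⟩ := hsub.2 z0 (Or.inl hz0) u' (Or.inr rfl)
      have h0n : 0 < n := by
        rcases Nat.eq_zero_or_pos n with rfl | h
        · exfalso
          apply hz0
          have hz : z0 = u' := by
            rw [← h0, ← hlast]
            exact congrArg w.vs (Fin.ext (by simp))
          rw [hz]
          exact hu'
        · exact h
      have hmem : w.es ⟨n - 1, by omega⟩ ∈ ({x} ∪ G.genEdges x v : Set E) := by
        refine hincident _ u' ?_ hu'Z
        rw [w.ok ⟨n - 1, by omega⟩]
        have hsucc : (⟨n - 1, by omega⟩ : Fin n).succ = Fin.last n :=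
          Fin.ext (by simp only [Fin.val_succ, Fin.val_last]; omega)
        rw [hsucc, hlast]
        exact Sym2.mem_mk_right _ _
      exact hes ⟨n - 1, by omega⟩ hmem
  -- on-cycle vertices of the subtree
  have hcycles : ∀ p ∈ ({u} ∪ G.genVerts x v : Set V), G.VertexOnCycle p → p = u := by
    rintro p (h | h) hcyc
    · exact h
    · exact absurd hcyc (hZprop p ((hZiff p).mp h)).1
  have hmultone : ∀ p ∈ ({u} ∪ G.genVerts x v : Set V), p ≠ u → mult p = 1 := by
    rintro p (h | h) hne
    · exact absurd h hne
    · exact (hZprop p ((hZiff p).mp h)).2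
  exact ⟨⟨⟨{u} ∪ G.genVerts x v, {x} ∪ G.genEdges x v, u, Or.inl rfl, htree, hcompl,
    huniq, hcycles, hmultone⟩, rfl, rfl, rfl⟩,
    ⟨⟨{u} ∪ G.genVerts x v, {x} ∪ G.genEdges x v, u, Or.inl rfl, htree, hcompl,
      huniq, hcycles, hmultone⟩, Or.inl rfl⟩⟩
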